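/- arXiv:2601.02703 — 8 statements merged into one kernel-verified Lean document; each statement's English description precedes it below -/
import Mathlib

section
/- Let M, R, a, x be natural numbers with R^2 ≤ M < (R+1)^2, a ≤ 99, x ≤ 9, and suppose (20·R + x)·x ≤ 100·(M - R^2) + a and 100·(M - R^2) + a < (20·R + (x+1))·(x+1). Then (10·R + x)^2 ≤ 100·M + a < (10·R + x + 1)^2; equivalently, 10·R + x = Nat.sqrt (100·M + a). -/
/-- Inductive step of the remainder invariant for the digit-by-digit
integer square root algorithm. -/
theorem sqrt_digit_step (M R a x : ℕ)
    (hR : R ^ 2 ≤ M) (hR' : M < (R + 1) ^ 2)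
    (ha : a ≤ 99) (hx : x ≤ 9)
    (hfeas : (20 * R + x) * x ≤ 100 * (M - R ^ 2) + a)
    (hmax : 100 * (M - R ^ 2) + a < (20 * R + (x + 1)) * (x + 1)) :
    ((10 * R + x) ^ 2 ≤ 100 * M + a ∧ 100 * M + a < (10 * R + x + 1) ^ 2) ∧
      10 * R + x = Nat.sqrt (100 * M + a) := by
  obtain ⟨D, hD⟩ := Nat.le.dest hR
  subst hD
  rw [Nat.add_sub_cancel_left] at hfeas hmax
  have h1 : (10 * R + x) ^ 2 ≤ 100 * (R ^ 2 + D) + a := by nlinarith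
  have h2 : 100 * (R ^ 2 + D) + a < (10 * R + x + 1) ^ 2 := by nlinarith
  refine ⟨⟨h1, h2⟩, le_antisymm (Nat.le_sqrt.mpr (by nlinarith)) ?_⟩
  have := Nat.sqrt_lt'.mpr (by nlinarith : 100 * (R ^ 2 + D) + a < (10 * R + x + 1) ^ 2)
  omega
end

section
/- For all natural numbers N and j, Nat.sqrt (N / 10^(2·j)) = (Nat.sqrt N) / 10^j, where / denotes natural-number (floor) division. -/
/-- Prefix stability of the integer square root: the integer square root of the
number formed by the highest digit pairs of `N` consists of the leading digits
of `Nat.sqrt N`. -/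
theorem sqrt_prefix_stable (N j : ℕ) :
    Nat.sqrt (N / 10 ^ (2 * j)) = Nat.sqrt N / 10 ^ j := by
  set m : ℕ := 10 ^ j with hm
  have hmpos : 0 < m := pow_pos (by norm_num) j
  have h2 : (10 : ℕ) ^ (2 * j) = m * m := by
    rw [hm, two_mul, pow_add]
  set s := Nat.sqrt N with hs
  rw [h2]
  symm
  rw [Nat.eq_sqrt]
  constructor
  · -- (s/m)^2 ≤ N/(m*m)
    have h1 : (s / m) * (s / m) * (m * m) ≤ s * s := by
      have : (s / m) * m ≤ s := Nat.div_mul_le_self s m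
      calc (s / m) * (s / m) * (m * m) = ((s / m) * m) * ((s / m) * m) := by ring
        _ ≤ s * s := Nat.mul_le_mul this this
    have h2' : s * s ≤ N := by have := Nat.sqrt_le' N; simpa [hs, pow_two] using this
    exact (Nat.le_div_iff_mul_le (Nat.mul_pos hmpos hmpos)).2 (le_trans h1 h2')
  · -- N/(m*m) < (s/m+1)^2
    have h1 : s < (s / m + 1) * m := (Nat.div_lt_iff_lt_mul hmpos).1 (Nat.lt_succ_self _)
    have h2' : N < (s + 1) * (s + 1) := by have := Nat.lt_succ_sqrt' N; simpa [pow_two, Nat.succ_eq_add_one, hs] using this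
    have h3 : s + 1 ≤ (s / m + 1) * m := h1
    have : N < ((s / m + 1) * (s / m + 1)) * (m * m) := by
      calc N < (s + 1) * (s + 1) := h2'
        _ ≤ ((s / m + 1) * m) * ((s / m + 1) * m) := Nat.mul_le_mul h3 h3
        _ = ((s / m + 1) * (s / m + 1)) * (m * m) := by ring
    exact (Nat.div_lt_iff_lt_mul (Nat.mul_pos hmpos hmpos)).2 this
end

section
/- Define step : ℕ × ℕ → ℕ → ℕ × ℕ by step (R, Δ) a = (10·R + x, 100·Δ + a − (20·R + x)·x), where x is the greatest natural number with x ≤ 9 and (20·R + x)·x ≤ 100·Δ + a. Let L be a list of natural numbers each ≤ 99, let N = L.foldl (fun n a => 100·n + a) 0, and let (R, Δ) = L.foldl step (0, 0). Then N = R^2 + Δ, R^2 ≤ N < (R+1)^2 (so R = Nat.sqrt N), and Δ = 0 if and only if N is a perfect square. -/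
/-- One step of the digit-by-digit integer square root algorithm: given the
partial root `R` and remainder `Δ`, bring down the next two-digit block `a`
and append the greatest decimal digit `x` with `(20·R + x)·x ≤ 100·Δ + a`. -/
def sqrtStep (p : ℕ × ℕ) (a : ℕ) : ℕ × ℕ :=
  let R := p.1
  let Δ := p.2
  let x := Nat.findGreatest (fun x => (20 * R + x) * x ≤ 100 * Δ + a) 9
  (10 * R + x, 100 * Δ + a - (20 * R + x) * x)

lemma sqrtStep_inv (R Δ a : ℕ) (ha : a ≤ 99) (hΔ : Δ ≤ 2 * R) :
    100 * (R ^ 2 + Δ) + a = (sqrtStep (R, Δ) a).1 ^ 2 + (sqrtStep (R, Δ) a).2 ∧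
    (sqrtStep (R, Δ) a).2 ≤ 2 * (sqrtStep (R, Δ) a).1 := by
  set x := Nat.findGreatest (fun x => (20 * R + x) * x ≤ 100 * Δ + a) 9 with hx
  have heq : sqrtStep (R, Δ) a = (10 * R + x, 100 * Δ + a - (20 * R + x) * x) := rfl
  rw [heq]
  have hP : (20 * R + x) * x ≤ 100 * Δ + a := by
    have := Nat.findGreatest_spec (P := fun x => (20 * R + x) * x ≤ 100 * Δ + a)
      (Nat.zero_le 9) (by simp)
    rw [← hx] at this
    exact this
  have hx9 : x ≤ 9 := Nat.findGreatest_le 9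
  have hub : 100 * Δ + a < (20 * R + (x + 1)) * (x + 1) := by
    rcases eq_or_lt_of_le hx9 with h9 | hlt
    · have he : (20 * R + (9 + 1)) * (9 + 1) = 200 * R + 100 := by ring
      rw [h9, he]; omega
    · have hng := Nat.findGreatest_is_greatest (P := fun x => (20 * R + x) * x ≤ 100 * Δ + a)
        (hx ▸ Nat.lt_succ_self x) hlt
      simpa using Nat.lt_of_not_le (by simpa using hng)
  have hexp : (20 * R + (x + 1)) * (x + 1) = (20 * R + x) * x + (20 * R + 2 * x + 1) := by
    ring
  have hsq : (10 * R + x) ^ 2 = 100 * R ^ 2 + (20 * R + x) * x := by ring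
  constructor
  · simp only
    omega
  · simp only
    omega

lemma sqrt_foldl_inv : ∀ (L : List ℕ), (∀ a ∈ L, a ≤ 99) → ∀ (n R Δ : ℕ),
    n = R ^ 2 + Δ → Δ ≤ 2 * R →
    L.foldl (fun n a => 100 * n + a) n = (L.foldl sqrtStep (R, Δ)).1 ^ 2 +
      (L.foldl sqrtStep (R, Δ)).2 ∧
    (L.foldl sqrtStep (R, Δ)).2 ≤ 2 * (L.foldl sqrtStep (R, Δ)).1
  | [], _, n, R, Δ, h1, h2 => ⟨h1, h2⟩
  | a :: L, hL, n, R, Δ, h1, h2 => by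
    simp only [List.foldl_cons]
    obtain ⟨e1, e2⟩ := sqrtStep_inv R Δ a (hL a (by simp)) h2
    have h1' : 100 * n + a = (sqrtStep (R, Δ) a).1 ^ 2 + (sqrtStep (R, Δ) a).2 := by
      rw [h1]; exact e1
    have := sqrt_foldl_inv L (fun b hb => hL b (by simp [hb])) (100 * n + a)
      (sqrtStep (R, Δ) a).1 (sqrtStep (R, Δ) a).2 h1' e2
    simpa using this

/-- Correctness of the digit-by-digit integer square root algorithm. -/
theorem sqrt_digit_by_digit_correct (L : List ℕ) (hL : ∀ a ∈ L, a ≤ 99)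
    (N : ℕ) (hN : N = L.foldl (fun n a => 100 * n + a) 0)
    (R Δ : ℕ) (hRΔ : (R, Δ) = L.foldl sqrtStep (0, 0)) :
    N = R ^ 2 + Δ ∧ (R ^ 2 ≤ N ∧ N < (R + 1) ^ 2) ∧ R = Nat.sqrt N ∧
      (Δ = 0 ↔ ∃ r : ℕ, N = r ^ 2) := by
  obtain ⟨h1, h2⟩ := sqrt_foldl_inv L hL 0 0 0 (by simp) (by simp)
  rw [← hRΔ] at h1 h2
  simp only at h1 h2
  rw [← hN] at h1
  have hlt : N < (R + 1) ^ 2 := by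
    have : (R + 1) ^ 2 = R ^ 2 + 2 * R + 1 := by ring
    omega
  have hle : R ^ 2 ≤ N := by omega
  have hsqrt : R = Nat.sqrt N := by
    refine le_antisymm (Nat.le_sqrt'.mpr hle) (Nat.le_of_lt_succ (Nat.sqrt_lt'.mpr hlt))
  refine ⟨h1, ⟨hle, hlt⟩, hsqrt, ?_, ?_⟩
  · intro h0
    exact ⟨R, by omega⟩
  · rintro ⟨r, hr⟩
    have : Nat.sqrt N = r := by rw [hr, Nat.sqrt_eq']
    have hRr : R = r := by rw [hsqrt, this]
    subst hRr
    omega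
end

section
/- Let N, k be natural numbers, let R = Nat.sqrt (N · 10^(2·k)), and let x be the greatest natural number with x ≤ 9 and (20·R + x)·x ≤ 100·(N · 10^(2·k) − R^2). Then 10·R + x = Nat.sqrt (N · 10^(2·(k+1))). -/
/-- Inductive step of the fractional digit-by-digit square root algorithm:
appending the maximal admissible decimal digit `x` to the partial
approximation `R = Nat.sqrt (N·10^(2k))` yields `Nat.sqrt (N·10^(2(k+1)))`. -/
theorem fractional_sqrt_digit_step (N k : ℕ)
    (R : ℕ) (hR : R = Nat.sqrt (N * 10 ^ (2 * k)))
    (x : ℕ)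
    (hx : x = Nat.findGreatest
      (fun x => (20 * R + x) * x ≤ 100 * (N * 10 ^ (2 * k) - R ^ 2)) 9) :
    10 * R + x = Nat.sqrt (N * 10 ^ (2 * (k + 1))) := by
  set M := N * 10 ^ (2 * k) with hM
  have hM' : N * 10 ^ (2 * (k + 1)) = 100 * M := by rw [hM]; ring
  rw [hM']
  have hsq : R ^ 2 ≤ M := hR ▸ Nat.sqrt_le' M
  have hlt : M < (R + 1) ^ 2 := hR ▸ Nat.lt_succ_sqrt' M
  subst hx
  set x := Nat.findGreatest
      (fun x => (20 * R + x) * x ≤ 100 * (M - R ^ 2)) 9 with hx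
  have hPx : (20 * R + x) * x ≤ 100 * (M - R ^ 2) := by
    rw [hx]
    exact Nat.findGreatest_spec (P := fun y => (20 * R + y) * y ≤ 100 * (M - R ^ 2)) (m := 0) (by norm_num) (by norm_num)
  have hx9 : x ≤ 9 := Nat.findGreatest_le 9
  have hub : 100 * (M - R ^ 2) = 100 * M - 100 * R ^ 2 := by omega
  have hlow : (10 * R + x) * (10 * R + x) ≤ 100 * M := by
    have h1 : (10 * R + x) * (10 * R + x) = 100 * R ^ 2 + (20 * R + x) * x := by ring
    rw [h1]
    rw [hub] at hPx
    have h2 : 100 * R ^ 2 ≤ 100 * M := Nat.mul_le_mul_left _ hsq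
    omega
  have hhigh : 100 * M < (10 * R + x + 1) * (10 * R + x + 1) := by
    rcases eq_or_lt_of_le hx9 with h9 | h9
    · rw [h9]
      have h3 : (10 * R + 9 + 1) * (10 * R + 9 + 1) = 100 * ((R + 1) ^ 2) := by ring
      rw [h3]
      exact (mul_lt_mul_iff_right₀ (by norm_num : (0:ℕ) < 100)).mpr hlt
    · have hnot : ¬ (20 * R + (x + 1)) * (x + 1) ≤ 100 * (M - R ^ 2) :=
        Nat.findGreatest_is_greatest (P := fun y => (20 * R + y) * y ≤ 100 * (M - R ^ 2)) (Nat.lt_succ_self x) h9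
      push_neg at hnot
      have h1 : (10 * R + x + 1) * (10 * R + x + 1)
          = 100 * R ^ 2 + (20 * R + (x + 1)) * (x + 1) := by ring
      omega
  have h1 : 10 * R + x ≤ Nat.sqrt (100 * M) := Nat.le_sqrt.mpr hlow
  have h2 : Nat.sqrt (100 * M) < 10 * R + x + 1 := Nat.sqrt_lt.mpr hhigh
  omega
end

section
/- Let e, R, Δ be natural numbers with e ≥ 1 and Δ < (10·R + 10)^e − (10·R)^e. Then there exists a unique natural number x with x ≤ 9 such that (10·R + x)^e − (10·R)^e ≤ Δ and Δ < (10·R + x + 1)^e − (10·R)^e. -/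
/-- Existence and uniqueness of the maximal admissible decimal digit at each
step of the digit-by-digit e-th root algorithm. -/
theorem digit_selection_exists_unique (e R Δ : ℕ) (he : 1 ≤ e)
    (hΔ : Δ < (10 * R + 10) ^ e - (10 * R) ^ e) :
    ∃! x : ℕ, x ≤ 9 ∧ (10 * R + x) ^ e - (10 * R) ^ e ≤ Δ ∧
      Δ < (10 * R + x + 1) ^ e - (10 * R) ^ e := by
  set f : ℕ → ℕ := fun x => (10 * R + x) ^ e - (10 * R) ^ e with hf
  have hmono : ∀ {a b : ℕ}, a ≤ b → f a ≤ f b := by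
    intro a b hab
    exact Nat.sub_le_sub_right (Nat.pow_le_pow_left (by omega) e) _
  have hP0 : f 0 ≤ Δ := by simp [hf]
  set x := Nat.findGreatest (fun x => f x ≤ Δ) 9 with hx
  have hx9 : x ≤ 9 := Nat.findGreatest_le 9
  have hxP : f x ≤ Δ :=
    Nat.findGreatest_spec (P := fun x => f x ≤ Δ) (Nat.zero_le 9) hP0
  have hxup : Δ < f (x + 1) := by
    rcases eq_or_lt_of_le hx9 with h9 | h9
    · have h10 : 10 * R + (x + 1) = 10 * R + 10 := by omega
      simp only [hf]
      rw [h10]; exact hΔ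
    · have h := Nat.findGreatest_is_greatest (P := fun x => f x ≤ Δ)
        (Nat.lt_succ_self x) (by omega)
      simp only [Nat.succ_eq_add_one] at h
      omega
  refine ⟨x, ⟨hx9, hxP, hxup⟩, ?_⟩
  rintro y ⟨hy9, hyP, hyup⟩
  have hyP' : f y ≤ Δ := hyP
  have hyup' : Δ < f (y + 1) := hyup
  by_contra hne
  rcases Nat.lt_or_ge y x with h | h
  · have : f (y + 1) ≤ f x := hmono (by omega)
    omega
  · have : f (x + 1) ≤ f y := hmono (by omega)
    omega
end

section
/- Let e, M, R, a, x be natural numbers with e ≥ 1, R^e ≤ M < (R+1)^e, a < 10^e, x ≤ 9, and suppose (10·R + x)^e − (10·R)^e ≤ 10^e·(M − R^e) + a and 10^e·(M − R^e) + a < (10·R + x + 1)^e − (10·R)^e. Then (10·R + x)^e ≤ 10^e·M + a < (10·R + x + 1)^e. -/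
/-- Inductive step of the remainder invariant for the digit-by-digit
integer e-th root algorithm. -/
theorem eth_root_digit_step (e M R a x : ℕ) (he : 1 ≤ e)
    (hR : R ^ e ≤ M) (hR' : M < (R + 1) ^ e)
    (ha : a < 10 ^ e) (hx : x ≤ 9)
    (hfeas : (10 * R + x) ^ e - (10 * R) ^ e ≤ 10 ^ e * (M - R ^ e) + a)
    (hmax : 10 ^ e * (M - R ^ e) + a < (10 * R + x + 1) ^ e - (10 * R) ^ e) :
    (10 * R + x) ^ e ≤ 10 ^ e * M + a ∧ 10 ^ e * M + a < (10 * R + x + 1) ^ e := by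
  have hA : (10 * R) ^ e = 10 ^ e * R ^ e := by rw [mul_pow]
  have hsub : 10 ^ e * (M - R ^ e) = 10 ^ e * M - (10 * R) ^ e := by
    rw [hA, Nat.mul_sub]
  have h1 : (10 * R) ^ e ≤ 10 ^ e * M := by
    rw [hA]; exact Nat.mul_le_mul_left _ hR
  have h2 : (10 * R) ^ e ≤ (10 * R + x) ^ e :=
    Nat.pow_le_pow_left (by omega) e
  have h3 : (10 * R) ^ e ≤ (10 * R + x + 1) ^ e :=
    Nat.pow_le_pow_left (by omega) e
  omega
end

section
/- Fix a natural number e ≥ 2. Define step : ℕ × ℕ → ℕ → ℕ × ℕ by step (R, Δ) a = (10·R + x, 10^e·Δ + a − ((10·R + x)^e − (10·R)^e)), where x is the greatest natural number with x ≤ 9 and (10·R + x)^e − (10·R)^e ≤ 10^e·Δ + a. Let L be a list of natural numbers each < 10^e, let N = L.foldl (fun n a => 10^e·n + a) 0, and let (R, Δ) = L.foldl step (0, 0). Then N = R^e + Δ, R^e ≤ N < (R+1)^e, and Δ = 0 if and only if there exists a natural number r with N = r^e. -/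
/-- One step of the digit-by-digit binomial e-th root algorithm: given the
partial root `R` and remainder `Δ`, bring down the next base-`10^e` block `a`
and append the greatest decimal digit `x` whose binomial increment
`(10·R + x)^e − (10·R)^e` does not exceed the scaled remainder. -/
def ethRootStep (e : ℕ) (p : ℕ × ℕ) (a : ℕ) : ℕ × ℕ :=
  let R := p.1
  let Δ := p.2
  let x := Nat.findGreatest
    (fun x => (10 * R + x) ^ e - (10 * R) ^ e ≤ 10 ^ e * Δ + a) 9
  (10 * R + x, 10 ^ e * Δ + a - ((10 * R + x) ^ e - (10 * R) ^ e))

lemma ethRoot_aux (e : ℕ) :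
    ∀ L : List ℕ, (∀ a ∈ L, a < 10 ^ e) → ∀ R Δ n, n = R ^ e + Δ →
      n < (R + 1) ^ e →
      (L.foldl (fun n a => 10 ^ e * n + a) n
          = (L.foldl (ethRootStep e) (R, Δ)).1 ^ e
            + (L.foldl (ethRootStep e) (R, Δ)).2) ∧
      L.foldl (fun n a => 10 ^ e * n + a) n
          < ((L.foldl (ethRootStep e) (R, Δ)).1 + 1) ^ e := by
  intro L
  induction L with
  | nil => intro _ R Δ n h1 h2; exact ⟨by simpa using h1, by simpa using h2⟩
  | cons a L ih =>
    intro hmem R Δ n h1 h2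
    have ha : a < 10 ^ e := hmem a (by simp)
    set P : ℕ → Prop := fun x => (10 * R + x) ^ e - (10 * R) ^ e ≤ 10 ^ e * Δ + a
      with hP
    set x := Nat.findGreatest P 9 with hx
    have hx9 : x ≤ 9 := Nat.findGreatest_le 9
    have hPx : P x := Nat.findGreatest_spec (m := 0) (Nat.zero_le 9)
      (by simp [hP])
    have hmono : (10 * R) ^ e ≤ (10 * R + x) ^ e :=
      Nat.pow_le_pow_left (by omega) e
    have hmul : (10 * R) ^ e = 10 ^ e * R ^ e := by rw [mul_pow]
    have hstep : L.foldl (ethRootStep e) ((10 * R + x),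
        10 ^ e * Δ + a - ((10 * R + x) ^ e - (10 * R) ^ e))
        = L.foldl (ethRootStep e) (ethRootStep e (R, Δ) a) := by
      simp [ethRootStep, hx, hP]
    have hnewsum : 10 ^ e * n + a
        = (10 * R + x) ^ e + (10 ^ e * Δ + a - ((10 * R + x) ^ e - (10 * R) ^ e)) := by
      have hPx' : (10 * R + x) ^ e - (10 * R) ^ e ≤ 10 ^ e * Δ + a := hPx
      have hdist : 10 ^ e * n = 10 ^ e * R ^ e + 10 ^ e * Δ := by rw [h1]; ring
      omega
    have hnewlt : 10 ^ e * n + a < (10 * R + x + 1 + 1 - 1) ^ e := by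
      rcases eq_or_lt_of_le hx9 with h9 | h9
      · have : 10 * R + x + 1 = 10 * (R + 1) := by omega
        rw [show 10 * R + x + 1 + 1 - 1 = 10 * (R + 1) by omega, mul_pow]
        calc 10 ^ e * n + a < 10 ^ e * n + 10 ^ e := by omega
          _ = 10 ^ e * (n + 1) := by ring
          _ ≤ 10 ^ e * (R + 1) ^ e := Nat.mul_le_mul_left _ (by omega)
      · have hng : ¬ P (x + 1) :=
          Nat.findGreatest_is_greatest (Nat.lt_succ_self x) h9
        simp only [hP] at hng
        have hmono' : (10 * R) ^ e ≤ (10 * R + (x + 1)) ^ e :=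
          Nat.pow_le_pow_left (by omega) e
        have : 10 * R + x + 1 + 1 - 1 = 10 * R + (x + 1) := by omega
        rw [this]
        omega
    have := ih (fun b hb => hmem b (by simp [hb])) (10 * R + x)
      (10 ^ e * Δ + a - ((10 * R + x) ^ e - (10 * R) ^ e))
      (10 ^ e * n + a) hnewsum (by simpa using hnewlt)
    rw [hstep] at this
    simpa [List.foldl_cons] using this

/-- Correctness of the digit-by-digit binomial algorithm for exact e-th power
detection and integer e-th root computation. -/
theorem eth_root_digit_by_digit_correct (e : ℕ) (he : 2 ≤ e)
    (L : List ℕ) (hL : ∀ a ∈ L, a < 10 ^ e)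
    (N : ℕ) (hN : N = L.foldl (fun n a => 10 ^ e * n + a) 0)
    (R Δ : ℕ) (hRΔ : (R, Δ) = L.foldl (ethRootStep e) (0, 0)) :
    N = R ^ e + Δ ∧ (R ^ e ≤ N ∧ N < (R + 1) ^ e) ∧
      (Δ = 0 ↔ ∃ r : ℕ, N = r ^ e) := by
  have h := ethRoot_aux e L hL 0 0 0
    (by simp [(Nat.zero_pow (by omega : 0 < e))])
    (by positivity)
  rw [← hRΔ] at h
  simp only at h
  obtain ⟨h1, h2⟩ := h
  rw [← hN] at h1 h2
  refine ⟨h1, ⟨by omega, h2⟩, ?_⟩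
  constructor
  · intro h0; exact ⟨R, by omega⟩
  · rintro ⟨r, hr⟩
    have hRr : R = r := by
      by_contra hne
      rcases Nat.lt_or_ge R r with h | h
      · have : (R + 1) ^ e ≤ r ^ e := Nat.pow_le_pow_left (by omega) e
        omega
      · have hlt : r < R := by omega
        have : r ^ e < R ^ e := Nat.pow_lt_pow_left hlt (by omega)
        omega
    subst hRr
    omega
end

section
/- Let e ≥ 1 and let N, j be natural numbers. Then ⌊((N / 10^(e·j) : ℕ) : ℝ) ^ ((1 : ℝ)/e)⌋₊ = ⌊(N : ℝ) ^ ((1 : ℝ)/e)⌋₊ / 10^j, where the inner / is natural-number (floor) division, ^ on the reals is the real power function (rpow), and ⌊·⌋₊ is the natural-number floor. -/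
lemma le_floor_root_iff (e : ℕ) (he : 1 ≤ e) (N k : ℕ) :
    k ≤ ⌊(N : ℝ) ^ ((1 : ℝ) / e)⌋₊ ↔ k ^ e ≤ N := by
  have he' : (e : ℝ) ≠ 0 := by positivity
  rw [Nat.le_floor_iff (Real.rpow_nonneg (Nat.cast_nonneg N) _)]
  constructor
  · intro h
    have := pow_le_pow_left₀ (by positivity) h e
    rw [← Real.rpow_natCast ((N:ℝ) ^ ((1:ℝ)/e)) e, ← Real.rpow_mul (Nat.cast_nonneg N),
      one_div_mul_cancel he', Real.rpow_one] at this
    exact_mod_cast this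
  · intro h
    have h' : ((k : ℝ) ^ e) ≤ (N : ℝ) := by exact_mod_cast h
    have := Real.rpow_le_rpow (by positivity) h' (by positivity : (0:ℝ) ≤ 1/e)
    rwa [← Real.rpow_natCast (k:ℝ) e, ← Real.rpow_mul (Nat.cast_nonneg k),
      mul_one_div_cancel he', Real.rpow_one] at this

/-- Prefix stability of the integer e-th root: the integer e-th root of the
number formed by the highest base-`10^e` blocks of `N` consists of the
leading digits of `⌊N^(1/e)⌋`. -/
theorem eth_root_prefix_stable (e : ℕ) (he : 1 ≤ e) (N j : ℕ) :
    ⌊((N / 10 ^ (e * j) : ℕ) : ℝ) ^ ((1 : ℝ) / e)⌋₊ =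
      ⌊(N : ℝ) ^ ((1 : ℝ) / e)⌋₊ / 10 ^ j := by
  set r := ⌊(N : ℝ) ^ ((1 : ℝ) / e)⌋₊ with hr
  have hpos : 0 < (10:ℕ) ^ (e * j) := by positivity
  have hposj : 0 < (10:ℕ) ^ j := by positivity
  apply le_antisymm
  · by_contra h
    push_neg at h
    have h1 : r / 10 ^ j + 1 ≤ ⌊((N / 10 ^ (e * j) : ℕ) : ℝ) ^ ((1 : ℝ) / e)⌋₊ := h
    rw [le_floor_root_iff e he] at h1
    have h2 : (r / 10 ^ j + 1) ^ e * 10 ^ (e * j) ≤ N :=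
      (Nat.le_div_iff_mul_le hpos).mp h1
    have h3 : ((r / 10 ^ j + 1) * 10 ^ j) ^ e ≤ N := by
      rwa [mul_pow, ← pow_mul, Nat.mul_comm j e]
    have h4 : (r / 10 ^ j + 1) * 10 ^ j ≤ r := (le_floor_root_iff e he N _).mpr h3
    have h5 : r / 10 ^ j + 1 ≤ r / 10 ^ j := (Nat.le_div_iff_mul_le hposj).mpr h4
    omega
  · rw [le_floor_root_iff e he, Nat.le_div_iff_mul_le hpos]
    have h3 : (r / 10 ^ j * 10 ^ j) ^ e ≤ N := by
      apply (le_floor_root_iff e he N _).mp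
      calc r / 10 ^ j * 10 ^ j ≤ r := Nat.div_mul_le_self r _
        _ ≤ r := le_rfl
    rwa [mul_pow, ← pow_mul, Nat.mul_comm j e] at h3
end
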